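/- In the binary-state rating model, assume F is strictly concave on [0,1] and k > ν (equivalently c > b). Then there exist thresholds μ̲, μ̄ with 0 ≤ μ̲ < μ̄ ≤ 1 such that: (a) if μ0 ≤ μ̲, the pooling-on-L belief system (μ_L = μ0, τ_L = 1, τ_H = 0) is optimal; (b) if μ̲ < μ0 < μ̄, the belief system with μ_L = μ̲, μ_H = μ̄, τ_H = (μ0 − μ̲)/(μ̄ − μ̲) and τ_L = 1 − τ_H is optimal; (c) if μ0 ≥ μ̄, the pooling-on-H belief system (μ_H = μ0, τ_H = 1, τ_L = 0) is optimal. -/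

import Mathlib

open scoped BigOperators

noncomputable section

open Set

/-- Value of a belief system in the binary-state rating model:
`v̂(μ, H) = F(μ) + b − c(1−μ)` and `v̂(μ, L) = F(μ)`. -/
def ratingValue (F : ℝ → ℝ) (b c μL μH τL τH : ℝ) : ℝ :=
  τL * F μL + τH * (F μH + b - c * (1 - μH))

/-- A Bayes-plausible belief system in the binary-state rating model. -/
def IsBayesPlausibleBS (μ0 μL μH τL τH : ℝ) : Prop :=
  μL ∈ Set.Icc (0 : ℝ) 1 ∧ μH ∈ Set.Icc (0 : ℝ) 1 ∧ 0 ≤ τL ∧ 0 ≤ τH ∧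
  τL + τH = 1 ∧ τL * μL + τH * μH = μ0

/-- An optimal belief system in the binary-state rating model. -/
def IsOptimalBS (F : ℝ → ℝ) (b c μ0 μL μH τL τH : ℝ) : Prop :=
  IsBayesPlausibleBS μ0 μL μH τL τH ∧
  ∀ μL' μH' τL' τH' : ℝ, IsBayesPlausibleBS μ0 μL' μH' τL' τH' →
    ratingValue F b c μL' μH' τL' τH' ≤ ratingValue F b c μL μH τL τH

lemma value_le_line (F : ℝ → ℝ) (b c a s μ0 μL μH τL τH : ℝ)
    (hf : ∀ μ ∈ Set.Icc (0:ℝ) 1, F μ ≤ a + s*μ)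
    (hg : ∀ μ ∈ Set.Icc (0:ℝ) 1, F μ + b - c*(1-μ) ≤ a + s*μ)
    (hbp : IsBayesPlausibleBS μ0 μL μH τL τH) :
    ratingValue F b c μL μH τL τH ≤ a + s*μ0 := by
  obtain ⟨hL, hH, hτL, hτH, hsum, hmean⟩ := hbp
  have h1 : τL * F μL ≤ τL * (a + s*μL) := mul_le_mul_of_nonneg_left (hf _ hL) hτL
  have h2 : τH * (F μH + b - c*(1-μH)) ≤ τH * (a + s*μH) :=
    mul_le_mul_of_nonneg_left (hg _ hH) hτH
  have h3 : τL*(a+s*μL) + τH*(a+s*μH) = a + s*μ0 := by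
    linear_combination a * hsum + s * hmean
  unfold ratingValue
  linarith

lemma optimal_of_line (F : ℝ → ℝ) (b c a s μ0 μL μH τL τH : ℝ)
    (hf : ∀ μ ∈ Set.Icc (0:ℝ) 1, F μ ≤ a + s*μ)
    (hg : ∀ μ ∈ Set.Icc (0:ℝ) 1, F μ + b - c*(1-μ) ≤ a + s*μ)
    (hbp : IsBayesPlausibleBS μ0 μL μH τL τH)
    (hval : ratingValue F b c μL μH τL τH = a + s*μ0) :
    IsOptimalBS F b c μ0 μL μH τL τH := by
  refine ⟨hbp, fun μL' μH' τL' τH' hbp' => ?_⟩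
  rw [hval]
  exact value_le_line F b c a s μ0 μL' μH' τL' τH' hf hg hbp'

lemma concave_support {f : ℝ → ℝ} (hc : ConcaveOn ℝ (Set.Icc (0:ℝ) 1) f)
    {x : ℝ} (hx : x ∈ Set.Ioo (0:ℝ) 1) (hd : DifferentiableAt ℝ f x) :
    ∀ y ∈ Set.Icc (0:ℝ) 1, f y ≤ f x + deriv f x * (y - x) := by
  intro y hy
  have hxI : x ∈ Set.Icc (0:ℝ) 1 := Ioo_subset_Icc_self hx
  rcases lt_trichotomy y x with h | h | h
  · have h1 : deriv f x ≤ slope f y x := hc.deriv_le_slope hy hxI h hd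
    rw [slope_def_field] at h1
    have h2 : deriv f x * (x - y) ≤ f x - f y := by
      have := (le_div_iff₀ (by linarith)).mp h1
      linarith
    nlinarith
  · subst h; simp
  · have h1 : slope f x y ≤ deriv f x := hc.slope_le_deriv hxI hy h hd
    rw [slope_def_field] at h1
    have h2 : f y - f x ≤ deriv f x * (y - x) := by
      have := (div_le_iff₀ (by linarith)).mp h1
      linarith
    linarith

lemma deriv_eq_of_max {f : ℝ → ℝ} {x s d : ℝ} (hx : x ∈ Set.Ioo (0:ℝ) 1)
    (hd : HasDerivAt f d x)
    (hmax : ∀ y ∈ Set.Icc (0:ℝ) 1, f y - s*y ≤ f x - s*x) : d = s := by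
  have hloc : IsLocalMax (fun y => f y - s*y) x := by
    filter_upwards [Icc_mem_nhds hx.1 hx.2] with y hy using hmax y hy
  have hds : HasDerivAt (fun y => f y - s*y) (d - s*1) x :=
    hd.sub ((hasDerivAt_id x).const_mul s)
  have := hloc.hasDerivAt_eq_zero hds
  linarith

/-- Rating design with strictly concave `F` and `k > ν` (so
`c > b`): there are thresholds `μlo < μhi` such that pooling on `L` is optimal for
low priors, the split `{μ_L = μlo, μ_H = μhi}` is optimal for intermediate priors,
and pooling on `H` is optimal for high priors. -/
theorem rating_design_concave
    (F : ℝ → ℝ)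
    (hF : ContDiffOn ℝ 2 F (Set.Icc 0 1))
    (hmono : MonotoneOn F (Set.Icc 0 1))
    (hF0 : F 0 = 0) (hF1 : F 1 = 1)
    (hconc : StrictConcaveOn ℝ (Set.Icc (0 : ℝ) 1) F)
    (ν k : ℝ) (hν : ν ∈ Set.Ioo (0 : ℝ) 1) (hk : 0 < k) (hkν : ν < k) :
    ∃ μlo μhi : ℝ, 0 ≤ μlo ∧ μlo < μhi ∧ μhi ≤ 1 ∧
      ∀ μ0 ∈ Set.Ioo (0 : ℝ) 1,
        (μ0 ≤ μlo →
          IsOptimalBS F (ν / (1 - ν)) (k / (1 - ν)) μ0 μ0 μ0 1 0) ∧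
        (μlo < μ0 → μ0 < μhi →
          IsOptimalBS F (ν / (1 - ν)) (k / (1 - ν)) μ0 μlo μhi
            (1 - (μ0 - μlo) / (μhi - μlo)) ((μ0 - μlo) / (μhi - μlo))) ∧
        (μhi ≤ μ0 →
          IsOptimalBS F (ν / (1 - ν)) (k / (1 - ν)) μ0 μ0 μ0 0 1) := by
  have h1ν : (0:ℝ) < 1 - ν := by linarith [hν.2]
  set b : ℝ := ν / (1 - ν) with hbdef
  set c : ℝ := k / (1 - ν) with hcdef
  have hb : 0 < b := div_pos hν.1 h1ν
  have hbc : b < c := by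
    rw [hbdef, hcdef]
    exact (div_lt_div_iff_of_pos_right h1ν).2 hkν
  have hc : 0 < c := lt_trans hb hbc
  set g : ℝ → ℝ := fun μ => F μ + b - c*(1-μ) with hgdef
  set μs : ℝ := 1 - b / c with hμsdef
  have hμs0 : 0 < μs := by
    have : b / c < 1 := (div_lt_one hc).2 hbc
    simp [hμsdef]; linarith
  have hμs1 : μs < 1 := by
    have : 0 < b / c := div_pos hb hc
    simp [hμsdef]; linarith
  have hgF : ∀ μ : ℝ, g μ = F μ + c * (μ - μs) := by
    intro μ
    simp only [hgdef, hμsdef]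
    field_simp
    ring
  have hFc : ContinuousOn F (Set.Icc 0 1) := hF.continuousOn
  have hgc : ContinuousOn g (Set.Icc 0 1) := by
    apply (hFc.add continuousOn_const).sub
    exact (continuous_const.mul (continuous_const.sub continuous_id)).continuousOn
  have hF1' : ∀ y ∈ Set.Icc (0:ℝ) 1, F y ≤ 1 := by
    intro y hy
    calc F y ≤ F 1 := hmono hy (by norm_num) hy.2
    _ = 1 := hF1
  have hdiffF : ∀ x ∈ Set.Ioo (0:ℝ) 1, DifferentiableAt ℝ F x := by
    intro x hx
    exact (hF.differentiableOn (by norm_num)).differentiableAt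
      (Icc_mem_nhds hx.1 hx.2)
  have hgderiv : ∀ x : ℝ, DifferentiableAt ℝ F x →
      HasDerivAt g (deriv F x + c) x := by
    intro x hd
    have h1 : HasDerivAt (fun μ => c*(1-μ)) (c * (-1)) x :=
      ((hasDerivAt_id x).const_sub 1).const_mul c
    have h2 := ((hd.hasDerivAt.add_const b).sub h1)
    exact h2.congr_deriv (by ring)
  -- argmax functions
  have hA : ∀ β : ℝ, ∃ x, x ∈ Set.Icc (0:ℝ) 1 ∧
      ∀ y ∈ Set.Icc (0:ℝ) 1, F y - β*y ≤ F x - β*x := by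
    intro β
    obtain ⟨x, hx, hmax⟩ := isCompact_Icc.exists_isMaxOn (nonempty_Icc.2 zero_le_one)
      (hFc.sub (continuous_const.mul continuous_id).continuousOn)
    exact ⟨x, hx, fun y hy => hmax hy⟩
  have hB : ∀ β : ℝ, ∃ x, x ∈ Set.Icc (0:ℝ) 1 ∧
      ∀ y ∈ Set.Icc (0:ℝ) 1, g y - β*y ≤ g x - β*x := by
    intro β
    obtain ⟨x, hx, hmax⟩ := isCompact_Icc.exists_isMaxOn (nonempty_Icc.2 zero_le_one)
      (hgc.sub (continuous_const.mul continuous_id).continuousOn)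
    exact ⟨x, hx, fun y hy => hmax hy⟩
  choose mA hmAmem hmAmax using hA
  choose mB hmBmem hmBmax using hB
  set A : ℝ → ℝ := fun β => F (mA β) - β * mA β with hAdef
  set B : ℝ → ℝ := fun β => g (mB β) - β * mB β with hBdef
  -- Lipschitz continuity of A and B
  have lipA : ∀ β1 β2 : ℝ, A β1 - A β2 ≤ |β1 - β2| := by
    intro β1 β2
    have h1 : F (mA β1) - β2 * mA β1 ≤ A β2 := hmAmax β2 _ (hmAmem β1)
    have h2 : (β2 - β1) * mA β1 ≤ |β1 - β2| := by
      have hm := hmAmem β1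
      calc (β2 - β1) * mA β1 ≤ |β2 - β1| * mA β1 := by
            apply mul_le_mul_of_nonneg_right (le_abs_self _) hm.1
      _ ≤ |β2 - β1| * 1 := by
            apply mul_le_mul_of_nonneg_left hm.2 (abs_nonneg _)
      _ = |β1 - β2| := by rw [mul_one, abs_sub_comm]
    simp only [hAdef] at h1 ⊢
    linarith
  have lipB : ∀ β1 β2 : ℝ, B β1 - B β2 ≤ |β1 - β2| := by
    intro β1 β2
    have h1 : g (mB β1) - β2 * mB β1 ≤ B β2 := hmBmax β2 _ (hmBmem β1)
    have h2 : (β2 - β1) * mB β1 ≤ |β1 - β2| := by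
      have hm := hmBmem β1
      calc (β2 - β1) * mB β1 ≤ |β2 - β1| * mB β1 := by
            apply mul_le_mul_of_nonneg_right (le_abs_self _) hm.1
      _ ≤ |β2 - β1| * 1 := by
            apply mul_le_mul_of_nonneg_left hm.2 (abs_nonneg _)
      _ = |β1 - β2| := by rw [mul_one, abs_sub_comm]
    simp only [hBdef] at h1 ⊢
    linarith
  have hDcont : Continuous (fun β => A β - B β) := by
    have hAc : Continuous A := by
      apply LipschitzWith.continuous (K := 1)
      apply LipschitzWith.of_dist_le_mul
      intro β1 β2
      simp only [Real.dist_eq, NNReal.coe_one, one_mul, abs_sub_le_iff]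
      exact ⟨lipA β1 β2, by simpa [abs_sub_comm] using lipA β2 β1⟩
    have hBc : Continuous B := by
      apply LipschitzWith.continuous (K := 1)
      apply LipschitzWith.of_dist_le_mul
      intro β1 β2
      simp only [Real.dist_eq, NNReal.coe_one, one_mul, abs_sub_le_iff]
      exact ⟨lipB β1 β2, by simpa [abs_sub_comm] using lipB β2 β1⟩
    exact hAc.sub hBc
  -- D 0 < 0
  have hD0 : A 0 - B 0 < 0 := by
    have hA0 : A 0 ≤ 1 := by
      simp only [hAdef, zero_mul, sub_zero]
      exact hF1' _ (hmAmem 0)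
    have hB0 : 1 + b ≤ B 0 := by
      have h := hmBmax 0 1 (by norm_num)
      have hg1 : g 1 = 1 + b := by simp [hgdef, hF1]
      simp only [hBdef]
      rw [hg1] at h
      linarith [h]
    linarith
  -- D β₀ > 0 for large β₀
  have hAnonneg : ∀ β : ℝ, 0 ≤ A β := by
    intro β
    have h := hmAmax β 0 (by norm_num)
    rw [hF0] at h
    simp only [hAdef]
    linarith [h]
  have hg0 : g 0 < 0 := by simp [hgdef, hF0]; linarith
  have hev : ∀ᶠ μ in nhdsWithin 0 (Set.Icc (0:ℝ) 1), g μ < 0 := by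
    have ht : Filter.Tendsto g (nhdsWithin 0 (Set.Icc (0:ℝ) 1)) (nhds (g 0)) :=
      hgc 0 (by norm_num)
    exact ht.eventually (Filter.Tendsto.eventually_lt_const hg0 Filter.tendsto_id)
  obtain ⟨δ, hδpos, hδ⟩ := Metric.mem_nhdsWithin_iff.mp hev
  set β₀ : ℝ := (2 + b) / δ with hβ₀def
  have hβ₀pos : 0 < β₀ := div_pos (by linarith) hδpos
  have hgub : ∀ y ∈ Set.Icc (0:ℝ) 1, g y ≤ 1 + b := by
    intro y hy
    have h1 : F y ≤ 1 := hF1' y hy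
    have h2 : 0 ≤ c * (1 - y) := mul_nonneg hc.le (by linarith [hy.2])
    simp only [hgdef]
    linarith
  have hDβ₀ : 0 < A β₀ - B β₀ := by
    have hBneg : B β₀ < 0 := by
      set x := mB β₀ with hxdef
      have hx := hmBmem β₀
      by_cases hcase : x < δ
      · have hgx : g x < 0 := hδ ⟨by
          simp only [Metric.mem_ball, Real.dist_eq, sub_zero]
          rw [abs_of_nonneg hx.1]
          exact hcase, hx⟩
        have h0 : 0 ≤ β₀ * x := mul_nonneg hβ₀pos.le hx.1
        simp only [hBdef, ← hxdef]
        linarith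
      · push_neg at hcase
        have h1 : g x ≤ 1 + b := hgub x hx
        have h2 : β₀ * δ ≤ β₀ * x := mul_le_mul_of_nonneg_left hcase hβ₀pos.le
        have h3 : β₀ * δ = 2 + b := by
          rw [hβ₀def]; field_simp
        simp only [hBdef, ← hxdef]
        linarith
    linarith [hAnonneg β₀]
  -- IVT
  have hIVT := intermediate_value_Icc hβ₀pos.le ((hDcont.continuousOn) :
    ContinuousOn (fun β => A β - B β) (Set.Icc 0 β₀))
  have h0mem : (0:ℝ) ∈ Set.Icc (A 0 - B 0) (A β₀ - B β₀) := ⟨hD0.le, hDβ₀.le⟩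
  obtain ⟨β, hβmem, hβeq⟩ := hIVT h0mem
  have hAB : A β = B β := by
    have h : A β - B β = 0 := hβeq
    linarith
  -- bitangent line μ ↦ A β + β μ
  set μlo := mA β with hμlodef
  set μhi := mB β with hμhidef
  have hμloI : μlo ∈ Set.Icc (0:ℝ) 1 := hmAmem β
  have hμhiI : μhi ∈ Set.Icc (0:ℝ) 1 := hmBmem β
  have hfl : ∀ y ∈ Set.Icc (0:ℝ) 1, F y ≤ A β + β * y := by
    intro y hy
    have h := hmAmax β y hy
    simp only [hAdef]
    linarith
  have hgl : ∀ y ∈ Set.Icc (0:ℝ) 1, g y ≤ A β + β * y := by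
    intro y hy
    have h := hmBmax β y hy
    have h2 : g (mB β) - β * mB β = A β := by rw [hAB]
    linarith
  have heqlo : F μlo = A β + β * μlo := by simp only [hAdef, hμlodef]; ring
  have heqhi : g μhi = A β + β * μhi := by
    rw [hAB]; simp only [hBdef, hμhidef]; ring
  have hμlole : μlo ≤ μs := by
    have h1 : g μlo ≤ A β + β * μlo := hgl μlo hμloI
    rw [← heqlo] at h1
    have h2 := hgF μlo
    by_contra hcon
    push_neg at hcon
    have h3 : 0 < c * (μlo - μs) := mul_pos hc (by linarith)
    linarith
  have hμsle : μs ≤ μhi := by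
    have h1 : F μhi ≤ A β + β * μhi := hfl μhi hμhiI
    rw [← heqhi] at h1
    have h2 := hgF μhi
    by_contra hcon
    push_neg at hcon
    have h3 : c * (μhi - μs) < 0 := mul_neg_of_pos_of_neg hc (by linarith)
    linarith
  have hμsIoo : μs ∈ Set.Ioo (0:ℝ) 1 := ⟨hμs0, hμs1⟩
  have hlohi : μlo < μhi := by
    by_contra hcon
    push_neg at hcon
    have he1 : μlo = μs := le_antisymm hμlole (hμsle.trans hcon)
    have he2 : μhi = μs := le_antisymm (hcon.trans_eq he1) hμsle
    have hdF := hdiffF μs hμsIoo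
    have hd1 : deriv F μs = β := by
      apply deriv_eq_of_max hμsIoo hdF.hasDerivAt
      intro y hy
      have := hmAmax β y hy
      rw [← hμlodef, he1] at this
      exact this
    have hd2 : deriv F μs + c = β := by
      apply deriv_eq_of_max hμsIoo (hgderiv μs hdF)
      intro y hy
      have := hmBmax β y hy
      rw [← hμhidef, he2] at this
      exact this
    linarith
  -- concavity of g
  have hgconc : ConcaveOn ℝ (Set.Icc (0:ℝ) 1) g := by
    refine ⟨convex_Icc 0 1, ?_⟩
    intro x hx y hy p q hp hq hpq
    have h := hconc.concaveOn.2 hx hy hp hq hpq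
    have hq' : q = 1 - p := by linarith
    subst hq'
    simp only [smul_eq_mul] at h ⊢
    simp only [hgdef]
    ring_nf
    ring_nf at h
    linarith
  refine ⟨μlo, μhi, hμloI.1, hlohi, hμhiI.2, ?_⟩
  intro μ0 hμ0
  have hμ0I : μ0 ∈ Set.Icc (0:ℝ) 1 := Ioo_subset_Icc_self hμ0
  refine ⟨?_, ?_, ?_⟩
  · -- case (a): pooling on L
    intro hle
    have hμloIoo : μlo ∈ Set.Ioo (0:ℝ) 1 :=
      ⟨lt_of_lt_of_le hμ0.1 hle, lt_of_lt_of_le hlohi hμhiI.2⟩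
    have hdlo := hdiffF μlo hμloIoo
    have hβlo : deriv F μlo = β :=
      deriv_eq_of_max hμloIoo hdlo.hasDerivAt (fun y hy => hmAmax β y hy)
    have hd0 := hdiffF μ0 hμ0
    set d0 := deriv F μ0 with hd0def
    have hsupp := concave_support hconc.concaveOn hμ0 hd0
    have hβd0 : β ≤ d0 := by
      rcases eq_or_lt_of_le hle with heq | hlt
      · rw [hd0def, heq, hβlo]
      · have s1 : deriv F μlo ≤ slope F μ0 μlo :=
          hconc.concaveOn.deriv_le_slope hμ0I hμloI hlt hdlo
        have s2 : slope F μ0 μlo ≤ deriv F μ0 :=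
          hconc.concaveOn.slope_le_deriv hμ0I hμloI hlt hd0
        rw [hβlo] at s1
        rw [hd0def]
        linarith
    set a0 : ℝ := F μ0 - d0 * μ0 with ha0def
    have hf0 : ∀ y ∈ Set.Icc (0:ℝ) 1, F y ≤ a0 + d0 * y := by
      intro y hy
      have := hsupp y hy
      rw [ha0def]
      linarith [this]
    have hg0 : ∀ y ∈ Set.Icc (0:ℝ) 1, F y + b - c*(1-y) ≤ a0 + d0 * y := by
      intro y hy
      have hrw : F y + b - c*(1-y) = g y := rfl
      rw [hrw]
      by_cases hy2 : y ≤ μs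
      · have h1 := hgF y
        have h2 := hf0 y hy
        have hm : c * (y - μs) ≤ 0 :=
          mul_nonpos_iff.mpr (Or.inl ⟨hc.le, by linarith⟩)
        linarith
      · push_neg at hy2
        have hgly := hgl y hy
        have e2 : F μlo ≤ a0 + d0 * μlo := hf0 μlo hμloI
        have hm : 0 ≤ (d0 - β) * (y - μlo) :=
          mul_nonneg (by linarith) (by linarith)
        linarith [heqlo]
    have hbp : IsBayesPlausibleBS μ0 μ0 μ0 1 0 :=
      ⟨hμ0I, hμ0I, zero_le_one, le_refl 0, by ring, by ring⟩
    apply optimal_of_line F b c a0 d0 μ0 _ _ _ _ hf0 hg0 hbp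
    unfold ratingValue
    rw [ha0def]
    ring
  · -- case (b): the split
    intro hlt1 hlt2
    set τH := (μ0 - μlo)/(μhi - μlo) with hτHdef
    have hdpos : 0 < μhi - μlo := by linarith
    have hτH0 : 0 ≤ τH := div_nonneg (by linarith) hdpos.le
    have hτH1 : τH ≤ 1 := by
      rw [hτHdef, div_le_one hdpos]; linarith
    have hmean : (1 - τH) * μlo + τH * μhi = μ0 := by
      rw [hτHdef]; field_simp; ring
    have hbp : IsBayesPlausibleBS μ0 μlo μhi (1 - τH) τH :=
      ⟨hμloI, hμhiI, by linarith, hτH0, by ring, hmean⟩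
    apply optimal_of_line F b c (A β) β μ0 _ _ _ _ hfl (fun y hy => hgl y hy) hbp
    have hrw : F μhi + b - c*(1-μhi) = g μhi := rfl
    unfold ratingValue
    rw [hrw, heqlo, heqhi]
    linear_combination β * hmean
  · -- case (c): pooling on H
    intro hge
    have hμhiIoo : μhi ∈ Set.Ioo (0:ℝ) 1 :=
      ⟨lt_of_le_of_lt hμloI.1 hlohi, lt_of_le_of_lt hge hμ0.2⟩
    have hdhiF := hdiffF μhi hμhiIoo
    have hdghi : HasDerivAt g (deriv F μhi + c) μhi := hgderiv μhi hdhiF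
    have hβhi : deriv F μhi + c = β :=
      deriv_eq_of_max hμhiIoo hdghi (fun y hy => hmBmax β y hy)
    have hd0F := hdiffF μ0 hμ0
    have hdg0 : HasDerivAt g (deriv F μ0 + c) μ0 := hgderiv μ0 hd0F
    have hdga : DifferentiableAt ℝ g μ0 := hdg0.differentiableAt
    have hderivg0 : deriv g μ0 = deriv F μ0 + c := hdg0.deriv
    set d0 := deriv F μ0 + c with hd0def
    have hsupp : ∀ y ∈ Set.Icc (0:ℝ) 1, g y ≤ g μ0 + d0 * (y - μ0) := by
      intro y hy
      have := concave_support hgconc hμ0 hdga y hy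
      rw [hderivg0] at this
      exact this
    have hd0β : d0 ≤ β := by
      rcases eq_or_lt_of_le hge with heq | hlt
      · rw [hd0def, ← heq, hβhi]
      · have s1 : deriv g μ0 ≤ slope g μhi μ0 :=
          hgconc.deriv_le_slope hμhiI hμ0I hlt hdga
        have s2 : slope g μhi μ0 ≤ deriv g μhi :=
          hgconc.slope_le_deriv hμhiI hμ0I hlt hdghi.differentiableAt
        have e3 : deriv g μhi = deriv F μhi + c := hdghi.deriv
        rw [hderivg0] at s1
        rw [e3, hβhi] at s2
        rw [hd0def]
        linarith
    set a0 : ℝ := g μ0 - d0 * μ0 with ha0def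
    have hg0 : ∀ y ∈ Set.Icc (0:ℝ) 1, g y ≤ a0 + d0 * y := by
      intro y hy
      have := hsupp y hy
      rw [ha0def]
      linarith
    have hf0 : ∀ y ∈ Set.Icc (0:ℝ) 1, F y ≤ a0 + d0 * y := by
      intro y hy
      by_cases hy2 : y ≤ μhi
      · have h1 := hfl y hy
        have e2 : g μhi ≤ a0 + d0 * μhi := hg0 μhi hμhiI
        have hm : 0 ≤ (β - d0) * (μhi - y) :=
          mul_nonneg (by linarith) (by linarith)
        linarith [heqhi]
      · push_neg at hy2
        have h1 := hgF y
        have h2 := hg0 y hy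
        have hm : 0 ≤ c * (y - μs) := mul_nonneg hc.le (by linarith)
        linarith
    have hbp : IsBayesPlausibleBS μ0 μ0 μ0 0 1 :=
      ⟨hμ0I, hμ0I, le_refl 0, zero_le_one, by ring, by ring⟩
    apply optimal_of_line F b c a0 d0 μ0 _ _ _ _ hf0
      (fun y hy => hg0 y hy) hbp
    have hrw : F μ0 + b - c*(1-μ0) = g μ0 := rfl
    unfold ratingValue
    rw [ha0def]
    simp only [hgdef]
    ring
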